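/- Linear program for the optimal steady-state value of an elementary link: let p ∈ (0,1), m* ∈ ℕ, and f : {−1,0,…,m*} → [0,1] with f(−1) = 0, and set |f⟩ := ∑_{m=−1}^{m*} f(m)|m⟩ and |γ⟩ := ∑_{m=−1}^{m*} |m⟩. Then sup over all decision functions d of lim_{t→∞} F̃^{(d,d,…)}(t) equals the optimal value of the linear program: maximize ⟨f|v⟩ over (m*+2)-dimensional real vectors v, w₀, w₁ subject to the componentwise constraints 0 ≤ w_a ≤ v ≤ 1 for a ∈ {0,1}, ⟨γ|v⟩ = 1, and w₀ + w₁ = v = T⁰w₀ + T¹w₁. Moreover, every feasible point (v, w₀, w₁) yields a decision function via d(m)(a) = ⟨m|w_a⟩/⟨m|v⟩ whenever ⟨m|v⟩ > 0 (arbitrary d(m) when ⟨m|v⟩ = 0). -/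

import Mathlib

open BigOperators Filter

noncomputable section

/-- Transition matrix `T⁰` of the "wait" action on the state set `{-1, 0, …, m*}`:
it fixes `-1`, sends `m` to `m+1` for `0 ≤ m ≤ m*-1`, and sends `m*` to `-1`. -/
def T0 (mstar : ℕ) : ℤ → ℤ → ℝ := fun s' s =>
  if s = -1 then (if s' = -1 then 1 else 0)
  else if s = (mstar : ℤ) then (if s' = -1 then 1 else 0)
  else if s' = s + 1 then 1 else 0

/-- Transition matrix `T¹` of the "request" action: every state goes to `-1` with
probability `1-p` and to `0` with probability `p`. -/
def T1 (p : ℝ) : ℤ → ℤ → ℝ := fun s' _ =>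
  if s' = -1 then 1 - p else if s' = 0 then p else 0

/-- The transition matrix `P^d` induced by the decision function with wait-probability
`α s = d(s)(0)` and request-probability `1 - α s = d(s)(1)`. -/
def Pd (mstar : ℕ) (p : ℝ) (α : ℤ → ℝ) : ℤ → ℤ → ℝ := fun s' s =>
  T0 mstar s' s * α s + T1 p s' s * (1 - α s)

/-- The distribution of the Markov chain `(M(t))` under the stationary policy `(d, d, …)`;
time `0` carries the initial distribution `μ0` of `M(1)`. -/
def chainDist (mstar : ℕ) (p : ℝ) (α : ℤ → ℝ) (μ0 : ℤ → ℝ) : ℕ → ℤ → ℝ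
  | 0 => μ0
  | (t + 1) => fun s' =>
      ∑ s ∈ Finset.Icc (-1 : ℤ) (mstar : ℤ), Pd mstar p α s' s * chainDist mstar p α μ0 t s

/-- The expected link value `F̃^{(d,d,…)}(t) = ∑_{m=0}^{m*} f(m) Pr[M(t) = m]`. -/
def Ftil (mstar : ℕ) (p : ℝ) (α : ℤ → ℝ) (μ0 : ℤ → ℝ) (f : ℤ → ℝ) (t : ℕ) : ℝ :=
  ∑ m ∈ Finset.Icc (0 : ℤ) (mstar : ℤ), f m * chainDist mstar p α μ0 t m

/-- `α` is a valid decision function: each `α s` is a probability. -/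
def ValidDecision (mstar : ℕ) (α : ℤ → ℝ) : Prop :=
  ∀ s ∈ Finset.Icc (-1 : ℤ) (mstar : ℤ), 0 ≤ α s ∧ α s ≤ 1

/-- `μ0` is a valid initial distribution on the state set. -/
def ValidInit (mstar : ℕ) (μ0 : ℤ → ℝ) : Prop :=
  (∀ s ∈ Finset.Icc (-1 : ℤ) (mstar : ℤ), 0 ≤ μ0 s) ∧
    ∑ s ∈ Finset.Icc (-1 : ℤ) (mstar : ℤ), μ0 s = 1

/-- The normalization constant `N_d`. -/
def Nd (mstar : ℕ) (p : ℝ) (α : ℤ → ℝ) : ℝ :=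
  1 - p * (1 - ∏ m' ∈ Finset.Icc (0 : ℤ) (mstar : ℤ), α m')
    + p * (1 - α (-1)) *
        (1 + ∑ m ∈ Finset.Icc (1 : ℤ) (mstar : ℤ), ∏ m' ∈ Finset.Icc (0 : ℤ) (m - 1), α m')

/-- The steady-state distribution `s_d`. -/
def sd (mstar : ℕ) (p : ℝ) (α : ℤ → ℝ) : ℤ → ℝ := fun m =>
  if m = -1 then
    (1 - p * (1 - ∏ m' ∈ Finset.Icc (0 : ℤ) (mstar : ℤ), α m')) / Nd mstar p α
  else if m = 0 then p * (1 - α (-1)) / Nd mstar p α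
  else p * (1 - α (-1)) * (∏ m' ∈ Finset.Icc (0 : ℤ) (m - 1), α m') / Nd mstar p α

/-- Feasibility of a point `(v, w₀, w₁)` for the elementary-link linear program:
`0 ≤ w_a ≤ v ≤ 1` componentwise, `⟨γ|v⟩ = 1`, and `w₀ + w₁ = v = T⁰w₀ + T¹w₁`. -/
def LPFeasible (mstar : ℕ) (p : ℝ) (v w0 w1 : ℤ → ℝ) : Prop :=
  (∀ s ∈ Finset.Icc (-1 : ℤ) (mstar : ℤ),
      0 ≤ w0 s ∧ w0 s ≤ v s ∧ 0 ≤ w1 s ∧ w1 s ≤ v s ∧ v s ≤ 1) ∧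
  (∑ s ∈ Finset.Icc (-1 : ℤ) (mstar : ℤ), v s) = 1 ∧
  (∀ s ∈ Finset.Icc (-1 : ℤ) (mstar : ℤ), w0 s + w1 s = v s) ∧
  (∀ s' ∈ Finset.Icc (-1 : ℤ) (mstar : ℤ),
      v s' = ∑ s ∈ Finset.Icc (-1 : ℤ) (mstar : ℤ), (T0 mstar s' s * w0 s + T1 p s' s * w1 s))

namespace ELink

abbrev SS (mstar : ℕ) : Finset ℤ := Finset.Icc (-1 : ℤ) (mstar : ℤ)

lemma neg_one_mem (mstar : ℕ) : (-1 : ℤ) ∈ SS mstar := by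
  simp only [SS, Finset.mem_Icc]; omega

lemma zero_mem (mstar : ℕ) : (0 : ℤ) ∈ SS mstar := by
  simp only [SS, Finset.mem_Icc]; omega

/-- The one-step evolution operator on distributions. -/
def Phi (mstar : ℕ) (p : ℝ) (α : ℤ → ℝ) (μ : ℤ → ℝ) : ℤ → ℝ :=
  fun s' => ∑ s ∈ SS mstar, Pd mstar p α s' s * μ s

lemma chainDist_eq_iterate (mstar : ℕ) (p : ℝ) (α μ0 : ℤ → ℝ) (t : ℕ) :
    chainDist mstar p α μ0 t = (Phi mstar p α)^[t] μ0 := by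
  induction t with
  | zero => rfl
  | succ t ih =>
    rw [Function.iterate_succ_apply']
    funext s'
    simp [chainDist, Phi, ih]

lemma T0_nonneg (mstar : ℕ) (s' s : ℤ) : 0 ≤ T0 mstar s' s := by
  unfold T0; split_ifs <;> norm_num

lemma T1_nonneg (p : ℝ) (hp0 : 0 ≤ p) (hp1 : p ≤ 1) (s' s : ℤ) : 0 ≤ T1 p s' s := by
  unfold T1; split_ifs <;> linarith

lemma Pd_nonneg (mstar : ℕ) (p : ℝ) (α : ℤ → ℝ) (hp0 : 0 ≤ p) (hp1 : p ≤ 1)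
    (hα : ValidDecision mstar α) (s' s : ℤ) (hs : s ∈ SS mstar) :
    0 ≤ Pd mstar p α s' s := by
  obtain ⟨h1, h2⟩ := hα s hs
  exact add_nonneg (mul_nonneg (T0_nonneg _ _ _) h1)
    (mul_nonneg (T1_nonneg p hp0 hp1 _ _) (by linarith))

lemma T0_colsum (mstar : ℕ) (s : ℤ) (hs : s ∈ SS mstar) :
    ∑ s' ∈ SS mstar, T0 mstar s' s = 1 := by
  simp only [SS, Finset.mem_Icc] at hs
  by_cases h2 : s = -1 ∨ s = (mstar : ℤ)
  · have hT : ∀ x : ℤ, T0 mstar x s = if x = -1 then 1 else 0 := by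
      intro x; unfold T0; split_ifs <;> first | rfl | omega
    simp only [hT]
    rw [Finset.sum_ite_eq' (SS mstar) (-1 : ℤ) (fun _ => (1:ℝ)), if_pos (neg_one_mem mstar)]
  · push_neg at h2
    have hmem : s + 1 ∈ SS mstar := by simp only [SS, Finset.mem_Icc]; omega
    have hT : ∀ x : ℤ, T0 mstar x s = if x = s + 1 then 1 else 0 := by
      intro x; unfold T0; split_ifs <;> first | rfl | omega
    simp only [hT]
    rw [Finset.sum_ite_eq' (SS mstar) (s + 1 : ℤ) (fun _ => (1:ℝ)), if_pos hmem]

lemma T1_colsum (mstar : ℕ) (p : ℝ) (s : ℤ) :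
    ∑ s' ∈ SS mstar, T1 p s' s = 1 := by
  have hsplit : ∀ s' : ℤ, T1 p s' s =
      (if s' = -1 then 1 - p else 0) + (if s' = 0 then p else 0) := by
    intro s'
    unfold T1
    split_ifs with h1 h2 <;> first | omega | norm_num
  simp only [hsplit]
  rw [Finset.sum_add_distrib,
    Finset.sum_ite_eq' (SS mstar) (-1 : ℤ) (fun _ => (1 - p : ℝ)),
    Finset.sum_ite_eq' (SS mstar) (0 : ℤ) (fun _ => (p : ℝ)),
    if_pos (neg_one_mem mstar), if_pos (zero_mem mstar)]
  ring

lemma Pd_colsum (mstar : ℕ) (p : ℝ) (α : ℤ → ℝ) (s : ℤ) (hs : s ∈ SS mstar) :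
    ∑ s' ∈ SS mstar, Pd mstar p α s' s = 1 := by
  unfold Pd
  rw [Finset.sum_add_distrib, ← Finset.sum_mul, ← Finset.sum_mul,
    T0_colsum mstar s hs, T1_colsum mstar p s]
  ring

lemma Phi_sum (mstar : ℕ) (p : ℝ) (α μ : ℤ → ℝ) :
    ∑ s' ∈ SS mstar, Phi mstar p α μ s' = ∑ s ∈ SS mstar, μ s := by
  unfold Phi
  rw [Finset.sum_comm]
  refine Finset.sum_congr rfl fun s hs => ?_
  rw [← Finset.sum_mul, Pd_colsum mstar p α s hs, one_mul]

lemma Phi_nonneg (mstar : ℕ) (p : ℝ) (α : ℤ → ℝ) (hp0 : 0 ≤ p) (hp1 : p ≤ 1)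
    (hα : ValidDecision mstar α) (μ : ℤ → ℝ) (hμ : ∀ s ∈ SS mstar, 0 ≤ μ s) (s' : ℤ) :
    0 ≤ Phi mstar p α μ s' :=
  Finset.sum_nonneg fun s hs =>
    mul_nonneg (Pd_nonneg mstar p α hp0 hp1 hα s' s hs) (hμ s hs)

end ELink
namespace ELink

/-- Basis vector. -/
def evec (s : ℤ) : ℤ → ℝ := fun u => if u = s then 1 else 0

lemma evec_nonneg (s u : ℤ) : 0 ≤ evec s u := by
  unfold evec; split_ifs <;> norm_num

lemma Phi_smul_sum (mstar : ℕ) (p : ℝ) (α : ℤ → ℝ) (F : Finset ℤ) (c : ℤ → ℝ)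
    (g : ℤ → ℤ → ℝ) :
    Phi mstar p α (fun u => ∑ s ∈ F, c s * g s u)
      = fun s' => ∑ s ∈ F, c s * Phi mstar p α (g s) s' := by
  funext s'
  unfold Phi
  simp only [Finset.mul_sum]
  rw [Finset.sum_comm]
  refine Finset.sum_congr rfl fun s _ => Finset.sum_congr rfl fun u _ => by ring

lemma iter_rep (mstar : ℕ) (p : ℝ) (α : ℤ → ℝ) (k : ℕ) (hk : 1 ≤ k) (μ : ℤ → ℝ) :
    (Phi mstar p α)^[k] μ = fun s' =>
      ∑ s ∈ SS mstar, μ s * (Phi mstar p α)^[k] (evec s) s' := by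
  induction k with
  | zero => omega
  | succ k ih =>
    rcases Nat.eq_or_lt_of_le hk with h1 | h1
    · -- k + 1 = 1, i.e. k = 0
      have hk0 : k = 0 := by omega
      subst hk0
      have hrep : Phi mstar p α μ = Phi mstar p α (fun u => ∑ s ∈ SS mstar, μ s * evec s u) := by
        unfold Phi
        funext s'
        refine Finset.sum_congr rfl fun u hu => ?_
        congr 1
        have : ∀ s : ℤ, μ s * evec s u = if u = s then μ s else 0 := by
          intro s; unfold evec; split_ifs <;> simp
        simp only [this]
        rw [Finset.sum_ite_eq (SS mstar) u μ, if_pos hu]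
      rw [Function.iterate_succ_apply', Function.iterate_zero_apply, hrep, Phi_smul_sum]
      simp [Function.iterate_succ_apply', Function.iterate_zero_apply]
    · have hk' : 1 ≤ k := by omega
      rw [Function.iterate_succ_apply', ih hk']
      have := Phi_smul_sum mstar p α (SS mstar) μ
        (fun s => (Phi mstar p α)^[k] (evec s))
      rw [this]
      funext s'
      refine Finset.sum_congr rfl fun s _ => ?_
      rw [Function.iterate_succ_apply']

lemma iter_nonneg (mstar : ℕ) (p : ℝ) (α : ℤ → ℝ) (hp0 : 0 ≤ p) (hp1 : p ≤ 1)
    (hα : ValidDecision mstar α) (k : ℕ) (μ : ℤ → ℝ) (hμ : ∀ s, 0 ≤ μ s) :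
    ∀ s, 0 ≤ (Phi mstar p α)^[k] μ s := by
  induction k with
  | zero => exact hμ
  | succ k ih =>
    intro s
    rw [Function.iterate_succ_apply']
    exact Phi_nonneg mstar p α hp0 hp1 hα _ (fun u _ => ih u) s

lemma iter_sum (mstar : ℕ) (p : ℝ) (α : ℤ → ℝ) (k : ℕ) (μ : ℤ → ℝ) :
    ∑ s ∈ SS mstar, (Phi mstar p α)^[k] μ s = ∑ s ∈ SS mstar, μ s := by
  induction k with
  | zero => rfl
  | succ k ih =>
    rw [Function.iterate_succ_apply']
    rw [Phi_sum]
    exact ih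

end ELink
namespace ELink

lemma Pd_entry_diag (mstar : ℕ) (p : ℝ) (α : ℤ → ℝ) :
    Pd mstar p α (-1) (-1) = α (-1) + (1 - p) * (1 - α (-1)) := by
  simp [Pd, T0, T1]

lemma Pd_entry_top (mstar : ℕ) (p : ℝ) (α : ℤ → ℝ) :
    Pd mstar p α (-1) (mstar : ℤ) = α (mstar : ℤ) + (1 - p) * (1 - α (mstar : ℤ)) := by
  have hm : (mstar : ℤ) ≠ -1 := by omega
  simp [Pd, T0, T1, hm]

lemma Pd_entry_int_down (mstar : ℕ) (p : ℝ) (α : ℤ → ℝ) (s : ℤ)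
    (hs0 : 0 ≤ s) (hs2 : s ≠ (mstar : ℤ)) :
    Pd mstar p α (-1) s = (1 - p) * (1 - α s) := by
  have h1 : s ≠ -1 := by omega
  have h3 : (-1 : ℤ) ≠ s + 1 := by omega
  simp [Pd, T0, T1, h1, hs2, h3]

lemma Pd_entry_int_up (mstar : ℕ) (p : ℝ) (α : ℤ → ℝ) (s : ℤ)
    (hs0 : 0 ≤ s) (hs2 : s ≠ (mstar : ℤ)) :
    Pd mstar p α (s + 1) s = α s := by
  have h1 : s ≠ -1 := by omega
  have h3 : s + 1 ≠ (-1 : ℤ) := by omega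
  have h4 : s + 1 ≠ (0 : ℤ) := by omega
  simp [Pd, T0, T1, h1, hs2, h3, h4]

lemma doeblin_claim (mstar : ℕ) (p : ℝ) (α : ℤ → ℝ) (hp0 : 0 < p) (hp1 : p < 1)
    (hα : ValidDecision mstar α) :
    ∀ k : ℕ, ∀ μ : ℤ → ℝ, (∀ u, 0 ≤ μ u) → ∀ s ∈ SS mstar,
      (s = -1 ∨ (mstar : ℤ) + 1 ≤ (k : ℤ) + s) →
      ((1 - p) / 2) ^ k * μ s ≤ (Phi mstar p α)^[k] μ (-1) := by
  set c : ℝ := (1 - p) / 2 with hc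
  have hc0 : 0 < c := by simp [hc]; linarith
  intro k
  induction k with
  | zero =>
    intro μ hμ s hs hcond
    have hsS := Finset.mem_Icc.mp hs
    have hs1 : s = -1 := by rcases hcond with h | h; exact h; omega
    subst hs1
    simp
  | succ k ih =>
    intro μ hμ s hs hcond
    have hsS := Finset.mem_Icc.mp hs
    set ν := Phi mstar p α μ with hν
    have hνpos : ∀ u, 0 ≤ ν u := fun u =>
      Phi_nonneg mstar p α hp0.le hp1.le hα μ (fun x _ => hμ x) u
    have hsingle : ∀ s', Pd mstar p α s' s * μ s ≤ ν s' := by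
      intro s'
      exact Finset.single_le_sum
        (f := fun u => Pd mstar p α s' u * μ u)
        (fun u hu => mul_nonneg (Pd_nonneg mstar p α hp0.le hp1.le hα s' u hu) (hμ u)) hs
    have hck : (0:ℝ) ≤ c ^ k := le_of_lt (pow_pos hc0 k)
    have hμs : 0 ≤ μ s := hμ s
    have hα0 := (hα s hs).1
    have hα1 := (hα s hs).2
    rw [Function.iterate_succ_apply]
    -- goal: c^(k+1) * μ s ≤ Phi^[k] ν (-1)
    by_cases h1 : s = -1
    · subst h1
      have hIH := ih ν hνpos (-1) (neg_one_mem mstar) (Or.inl rfl)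
      have hentry : c * μ (-1) ≤ ν (-1) := by
        have := hsingle (-1)
        rw [Pd_entry_diag] at this
        nlinarith [mul_nonneg hp0.le hα0]
      calc c ^ (k+1) * μ (-1) = c ^ k * (c * μ (-1)) := by ring
        _ ≤ c ^ k * ν (-1) := by
            exact mul_le_mul_of_nonneg_left hentry hck
        _ ≤ _ := hIH
    · have hs0 : 0 ≤ s := by omega
      by_cases h2 : s = (mstar : ℤ)
      · subst h2
        have hIH := ih ν hνpos (-1) (neg_one_mem mstar) (Or.inl rfl)
        have hentry : c * μ (mstar : ℤ) ≤ ν (-1) := by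
          have := hsingle (-1)
          rw [Pd_entry_top] at this
          nlinarith [mul_nonneg hp0.le hα0]
        calc c ^ (k+1) * μ (mstar:ℤ) = c ^ k * (c * μ (mstar:ℤ)) := by ring
          _ ≤ c ^ k * ν (-1) := mul_le_mul_of_nonneg_left hentry hck
          _ ≤ _ := hIH
      · -- interior state
        by_cases h3 : (1:ℝ)/2 ≤ α s
        · -- move up to s + 1
          have hmem : s + 1 ∈ SS mstar := by simp only [SS, Finset.mem_Icc]; omega
          have hcond' : s + 1 = -1 ∨ (mstar : ℤ) + 1 ≤ (k : ℤ) + (s + 1) := by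
            right
            rcases hcond with h | h
            · omega
            · push_cast at h ⊢; omega
          have hIH := ih ν hνpos (s+1) hmem hcond'
          have hentry : c * μ s ≤ ν (s + 1) := by
            have := hsingle (s+1)
            rw [Pd_entry_int_up mstar p α s hs0 h2] at this
            nlinarith [mul_nonneg (by linarith : (0:ℝ) ≤ α s - 1/2 + p/2) hμs]
          calc c ^ (k+1) * μ s = c ^ k * (c * μ s) := by ring
            _ ≤ c ^ k * ν (s+1) := mul_le_mul_of_nonneg_left hentry hck
            _ ≤ _ := hIH
        · -- request with probability > 1/2
          have hIH := ih ν hνpos (-1) (neg_one_mem mstar) (Or.inl rfl)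
          have hentry : c * μ s ≤ ν (-1) := by
            have := hsingle (-1)
            rw [Pd_entry_int_down mstar p α s hs0 h2] at this
            nlinarith [mul_nonneg (mul_nonneg (by linarith : (0:ℝ) ≤ 1 - p)
              (by linarith : (0:ℝ) ≤ 1/2 - α s)) hμs]
          calc c ^ (k+1) * μ s = c ^ k * (c * μ s) := by ring
            _ ≤ c ^ k * ν (-1) := mul_le_mul_of_nonneg_left hentry hck
            _ ≤ _ := hIH

lemma doeblin (mstar : ℕ) (p : ℝ) (α : ℤ → ℝ) (hp0 : 0 < p) (hp1 : p < 1)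
    (hα : ValidDecision mstar α) (s : ℤ) (hs : s ∈ SS mstar) :
    ((1 - p) / 2) ^ (mstar + 1) ≤ (Phi mstar p α)^[mstar + 1] (evec s) (-1) := by
  have hsS := Finset.mem_Icc.mp hs
  have := doeblin_claim mstar p α hp0 hp1 hα (mstar + 1) (evec s) (evec_nonneg s) s hs
    (by
      by_cases h : s = -1
      · exact Or.inl h
      · right; push_cast; omega)
  have he : evec s s = 1 := by simp [evec]
  rw [he, mul_one] at this
  exact this

end ELink
namespace ELink

lemma weak_contract (mstar : ℕ) (p : ℝ) (α : ℤ → ℝ) (hp0 : 0 < p) (hp1 : p < 1)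
    (hα : ValidDecision mstar α) (d : ℤ → ℝ) :
    ∑ s' ∈ SS mstar, |Phi mstar p α d s'| ≤ ∑ s ∈ SS mstar, |d s| := by
  have hstep : ∀ s' ∈ SS mstar, |Phi mstar p α d s'| ≤
      ∑ s ∈ SS mstar, Pd mstar p α s' s * |d s| := by
    intro s' _
    calc |Phi mstar p α d s'| ≤ ∑ s ∈ SS mstar, |Pd mstar p α s' s * d s| :=
          Finset.abs_sum_le_sum_abs _ _
      _ = ∑ s ∈ SS mstar, Pd mstar p α s' s * |d s| := by
          refine Finset.sum_congr rfl fun s hs => ?_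
          rw [abs_mul, abs_of_nonneg (Pd_nonneg mstar p α hp0.le hp1.le hα s' s hs)]
  calc ∑ s' ∈ SS mstar, |Phi mstar p α d s'|
      ≤ ∑ s' ∈ SS mstar, ∑ s ∈ SS mstar, Pd mstar p α s' s * |d s| :=
        Finset.sum_le_sum hstep
    _ = ∑ s ∈ SS mstar, |d s| := by
        rw [Finset.sum_comm]
        refine Finset.sum_congr rfl fun s hs => ?_
        rw [← Finset.sum_mul, Pd_colsum mstar p α s hs, one_mul]

lemma contract (mstar : ℕ) (p : ℝ) (α : ℤ → ℝ) (hp0 : 0 < p) (hp1 : p < 1)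
    (hα : ValidDecision mstar α) (d : ℤ → ℝ) (hd : ∑ s ∈ SS mstar, d s = 0) :
    ∑ s' ∈ SS mstar, |(Phi mstar p α)^[mstar + 1] d s'| ≤
      (1 - ((1 - p) / 2) ^ (mstar + 1)) * ∑ s ∈ SS mstar, |d s| := by
  set N := mstar + 1 with hN
  set δ : ℝ := ((1 - p) / 2) ^ N with hδ
  set B : ℤ → ℤ → ℝ := fun s' s => (Phi mstar p α)^[N] (evec s) s' with hB
  have hB0 : ∀ s' s, 0 ≤ B s' s := fun s' s =>
    iter_nonneg mstar p α hp0.le hp1.le hα N (evec s) (evec_nonneg s) s'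
  have hBsum : ∀ s ∈ SS mstar, ∑ s' ∈ SS mstar, B s' s = 1 := by
    intro s hsmem
    rw [hB]
    rw [iter_sum]
    have : ∀ u : ℤ, evec s u = if u = s then (1:ℝ) else 0 := fun u => rfl
    simp only [this]
    rw [Finset.sum_ite_eq' (SS mstar) s (fun _ => (1:ℝ)), if_pos hsmem]
  have hBδ : ∀ s ∈ SS mstar, δ ≤ B (-1) s := fun s hsmem =>
    doeblin mstar p α hp0 hp1 hα s hsmem
  have hrep := iter_rep mstar p α N (by omega) d
  have key : ∀ s', (Phi mstar p α)^[N] d s' =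
      ∑ s ∈ SS mstar, d s * (B s' s - if s' = -1 then δ else 0) := by
    intro s'
    have h0 : ∑ s ∈ SS mstar, d s * (if s' = -1 then δ else 0) = 0 := by
      rw [← Finset.sum_mul, hd, zero_mul]
    calc (Phi mstar p α)^[N] d s' = ∑ s ∈ SS mstar, d s * B s' s := by rw [hrep]
      _ = ∑ s ∈ SS mstar, (d s * (B s' s - if s' = -1 then δ else 0)
            + d s * (if s' = -1 then δ else 0)) := by
          refine Finset.sum_congr rfl fun s _ => by ring
      _ = _ := by rw [Finset.sum_add_distrib, h0, add_zero]
  have hnn : ∀ s' ∈ SS mstar, ∀ s ∈ SS mstar,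
      0 ≤ B s' s - if s' = -1 then δ else 0 := by
    intro s' _ s hsmem
    split_ifs with h
    · subst h; linarith [hBδ s hsmem]
    · simpa using hB0 s' s
  have hbound : ∀ s' ∈ SS mstar, |(Phi mstar p α)^[N] d s'| ≤
      ∑ s ∈ SS mstar, |d s| * (B s' s - if s' = -1 then δ else 0) := by
    intro s' hs'
    rw [key s']
    calc |∑ s ∈ SS mstar, d s * (B s' s - if s' = -1 then δ else 0)|
        ≤ ∑ s ∈ SS mstar, |d s * (B s' s - if s' = -1 then δ else 0)| :=
          Finset.abs_sum_le_sum_abs _ _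
      _ = ∑ s ∈ SS mstar, |d s| * (B s' s - if s' = -1 then δ else 0) := by
          refine Finset.sum_congr rfl fun s hsmem => ?_
          rw [abs_mul, abs_of_nonneg (hnn s' hs' s hsmem)]
  calc ∑ s' ∈ SS mstar, |(Phi mstar p α)^[N] d s'|
      ≤ ∑ s' ∈ SS mstar, ∑ s ∈ SS mstar, |d s| * (B s' s - if s' = -1 then δ else 0) :=
        Finset.sum_le_sum hbound
    _ = ∑ s ∈ SS mstar, |d s| * (1 - δ) := by
        rw [Finset.sum_comm]
        refine Finset.sum_congr rfl fun s hsmem => ?_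
        rw [← Finset.mul_sum]
        congr 1
        rw [Finset.sum_sub_distrib, hBsum s hsmem,
          Finset.sum_ite_eq' (SS mstar) (-1 : ℤ) (fun _ => δ), if_pos (neg_one_mem mstar)]
    _ = (1 - δ) * ∑ s ∈ SS mstar, |d s| := by
        rw [← Finset.sum_mul, mul_comm]

end ELink
namespace ELink

lemma exists_geom (mstar : ℕ) (p : ℝ) (α : ℤ → ℝ) (hp0 : 0 < p) (hp1 : p < 1)
    (hα : ValidDecision mstar α) :
    ∃ C ρ : ℝ, 0 ≤ C ∧ 0 < ρ ∧ ρ < 1 ∧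
      ∀ d : ℤ → ℝ, (∑ s ∈ SS mstar, d s = 0) → ∀ t : ℕ, ∀ s ∈ SS mstar,
        |(Phi mstar p α)^[t] d s| ≤ C * (∑ u ∈ SS mstar, |d u|) * ρ ^ t := by
  set N := mstar + 1 with hNdef
  set δ : ℝ := ((1 - p) / 2) ^ N with hδdef
  have hc0 : (0:ℝ) < (1 - p) / 2 := by linarith
  have hc1 : (1 - p) / 2 < 1 := by linarith
  have hδ0 : 0 < δ := pow_pos hc0 N
  have hδ1 : δ < 1 := pow_lt_one₀ hc0.le hc1 (by omega)
  set r : ℝ := 1 - δ with hrdef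
  have hr0 : 0 < r := by simp only [hrdef]; linarith
  have hr1 : r < 1 := by simp only [hrdef]; linarith
  set ρ : ℝ := r ^ ((1 : ℝ) / N) with hρdef
  have hρ0 : 0 < ρ := Real.rpow_pos_of_pos hr0 _
  have hρ1 : ρ < 1 := Real.rpow_lt_one hr0.le hr1 (by positivity)
  have hρN : ρ ^ N = r := by
    rw [hρdef, ← Real.rpow_natCast (r ^ ((1:ℝ)/N)) N, ← Real.rpow_mul hr0.le]
    rw [one_div_mul_cancel (by positivity : ((N:ℝ)) ≠ 0), Real.rpow_one]
  refine ⟨(ρ ^ mstar)⁻¹, ρ, by positivity, hρ0, hρ1, ?_⟩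
  intro d hd t s hs
  -- the total variation sequence
  set g : ℕ → ℝ := fun t => ∑ s' ∈ SS mstar, |(Phi mstar p α)^[t] d s'| with hgdef
  have hsum0 : ∀ t : ℕ, ∑ s' ∈ SS mstar, (Phi mstar p α)^[t] d s' = 0 := by
    intro t; rw [iter_sum]; exact hd
  have hganti : Antitone g := by
    refine antitone_nat_of_succ_le fun t => ?_
    simp only [hgdef]
    calc ∑ s' ∈ SS mstar, |(Phi mstar p α)^[t+1] d s'|
        = ∑ s' ∈ SS mstar, |Phi mstar p α ((Phi mstar p α)^[t] d) s'| := by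
          simp only [Function.iterate_succ_apply']
      _ ≤ _ := weak_contract mstar p α hp0 hp1 hα _
  have hgeo : ∀ q : ℕ, g (N * q) ≤ r ^ q * g 0 := by
    intro q
    induction q with
    | zero => simp
    | succ q ih =>
      have heq : N * (q + 1) = N + N * q := by ring
      have h1 : g (N * (q+1)) ≤ r * g (N * q) := by
        simp only [hgdef, heq, Function.iterate_add_apply]
        exact contract mstar p α hp0 hp1 hα _ (hsum0 (N * q))
      calc g (N * (q+1)) ≤ r * g (N * q) := h1
        _ ≤ r * (r ^ q * g 0) := mul_le_mul_of_nonneg_left ih hr0.le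
        _ = r ^ (q+1) * g 0 := by ring
  have hg0 : 0 ≤ g 0 := Finset.sum_nonneg fun _ _ => abs_nonneg _
  have hgt : g t ≤ r ^ (t / N) * g 0 := by
    calc g t ≤ g (N * (t / N)) := hganti (by
        calc N * (t / N) = t / N * N := by ring
          _ ≤ t := Nat.div_mul_le_self t N)
      _ ≤ r ^ (t / N) * g 0 := hgeo (t / N)
  have hrt : r ^ (t / N) ≤ (ρ ^ mstar)⁻¹ * ρ ^ t := by
    have h1 : ρ ^ (N * (t / N) + mstar) ≤ ρ ^ t := by
      refine pow_le_pow_of_le_one hρ0.le hρ1.le ?_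
      have h2 := Nat.div_add_mod t N
      have h3 : t % N < N := Nat.mod_lt t (by omega)
      omega
    have h4 : r ^ (t / N) = ρ ^ (N * (t / N)) := by
      rw [pow_mul, hρN]
    rw [h4]
    rw [pow_add] at h1
    have hpm : (0:ℝ) < ρ ^ mstar := pow_pos hρ0 mstar
    calc ρ ^ (N * (t/N)) ≤ ρ ^ t / ρ ^ mstar := (le_div_iff₀ hpm).mpr h1
      _ = (ρ ^ mstar)⁻¹ * ρ ^ t := by ring
  have habs : |(Phi mstar p α)^[t] d s| ≤ g t :=
    Finset.single_le_sum (f := fun s' => |(Phi mstar p α)^[t] d s'|)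
      (fun _ _ => abs_nonneg _) hs
  calc |(Phi mstar p α)^[t] d s| ≤ g t := habs
    _ ≤ r ^ (t / N) * g 0 := hgt
    _ ≤ ((ρ ^ mstar)⁻¹ * ρ ^ t) * g 0 := mul_le_mul_of_nonneg_right hrt hg0
    _ = (ρ ^ mstar)⁻¹ * (∑ u ∈ SS mstar, |d u|) * ρ ^ t := by
        simp only [hgdef, Function.iterate_zero_apply]; ring

end ELink
namespace ELink

lemma Phi_sub (mstar : ℕ) (p : ℝ) (α μ ν : ℤ → ℝ) :
    Phi mstar p α (fun u => μ u - ν u) = fun s' => Phi mstar p α μ s' - Phi mstar p α ν s' := by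
  funext s'
  simp [Phi, mul_sub, Finset.sum_sub_distrib]

lemma iter_sub (mstar : ℕ) (p : ℝ) (α : ℤ → ℝ) (t : ℕ) (μ ν : ℤ → ℝ) :
    (Phi mstar p α)^[t] (fun u => μ u - ν u)
      = fun s => (Phi mstar p α)^[t] μ s - (Phi mstar p α)^[t] ν s := by
  induction t with
  | zero => rfl
  | succ t ih =>
    simp only [Function.iterate_succ_apply', ih]
    rw [← Phi_sub]

lemma iter_fix (mstar : ℕ) (p : ℝ) (α v : ℤ → ℝ)
    (hvstat : ∀ s' ∈ SS mstar, Phi mstar p α v s' = v s') :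
    ∀ t : ℕ, ∀ s ∈ SS mstar, (Phi mstar p α)^[t] v s = v s := by
  intro t
  induction t with
  | zero => intro s _; rfl
  | succ t ih =>
    intro s hs
    rw [Function.iterate_succ_apply']
    have : Phi mstar p α ((Phi mstar p α)^[t] v) s = Phi mstar p α v s := by
      show (∑ u ∈ SS mstar, Pd mstar p α s u * (Phi mstar p α)^[t] v u)
        = ∑ u ∈ SS mstar, Pd mstar p α s u * v u
      exact Finset.sum_congr rfl fun u hu => by rw [ih u hu]
    rw [this, hvstat s hs]

/-- Key convergence engine: the chain distribution converges pointwise on the state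
space to any distribution that is stationary on the state space. -/
lemma tendsto_chain (mstar : ℕ) (p : ℝ) (α : ℤ → ℝ) (hp0 : 0 < p) (hp1 : p < 1)
    (hα : ValidDecision mstar α) (μ0 : ℤ → ℝ) (hμ0 : ValidInit mstar μ0) (v : ℤ → ℝ)
    (hvsum : ∑ s ∈ SS mstar, v s = 1)
    (hvstat : ∀ s' ∈ SS mstar, Phi mstar p α v s' = v s') :
    ∀ s ∈ SS mstar, Tendsto (fun t => chainDist mstar p α μ0 t s) atTop (nhds (v s)) := by
  obtain ⟨C, ρ, hC, hρ0, hρ1, hbound⟩ := exists_geom mstar p α hp0 hp1 hα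
  intro s hs
  set d : ℤ → ℝ := fun u => μ0 u - v u with hddef
  have hd : ∑ u ∈ SS mstar, d u = 0 := by
    simp only [hddef]
    rw [Finset.sum_sub_distrib, hμ0.2, hvsum, sub_self]
  have hdiff : ∀ t : ℕ, chainDist mstar p α μ0 t s - v s = (Phi mstar p α)^[t] d s := by
    intro t
    have h1 : (Phi mstar p α)^[t] d s
        = (Phi mstar p α)^[t] μ0 s - (Phi mstar p α)^[t] v s := by
      rw [hddef]
      exact congrFun (iter_sub mstar p α t μ0 v) s
    rw [chainDist_eq_iterate, h1, iter_fix mstar p α v hvstat t s hs]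
  have hzero : Tendsto (fun t => chainDist mstar p α μ0 t s - v s) atTop (nhds 0) := by
    apply squeeze_zero_norm (a := fun t => C * (∑ u ∈ SS mstar, |d u|) * ρ ^ t)
    · intro t
      rw [Real.norm_eq_abs, hdiff t]
      exact hbound d hd t s hs
    · rw [show (0:ℝ) = C * (∑ u ∈ SS mstar, |d u|) * 0 by ring]
      exact (tendsto_pow_atTop_nhds_zero_of_lt_one hρ0.le hρ1).const_mul _
  have := hzero.add_const (v s)
  simpa using this

lemma Pd_outside (mstar : ℕ) (p : ℝ) (α : ℤ → ℝ) (s u : ℤ)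
    (hs : s ∉ SS mstar) (hu : u ∈ SS mstar) : Pd mstar p α s u = 0 := by
  simp only [SS, Finset.mem_Icc, not_and, not_le] at hs
  simp only [SS, Finset.mem_Icc] at hu
  unfold Pd T0 T1
  split_ifs <;> first | (exfalso; omega) | ring

lemma chain_outside (mstar : ℕ) (p : ℝ) (α μ0 : ℤ → ℝ) (s : ℤ) (hs : s ∉ SS mstar)
    (t : ℕ) : chainDist mstar p α μ0 (t + 1) s = 0 := by
  show (∑ u ∈ Finset.Icc (-1 : ℤ) (mstar : ℤ), Pd mstar p α s u * chainDist mstar p α μ0 t u) = 0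
  refine Finset.sum_eq_zero fun u hu => ?_
  rw [Pd_outside mstar p α s u hs hu, zero_mul]

/-- Existence of a pointwise limit of the chain distribution. -/
lemma exists_limit (mstar : ℕ) (p : ℝ) (α : ℤ → ℝ) (hp0 : 0 < p) (hp1 : p < 1)
    (hα : ValidDecision mstar α) (μ0 : ℤ → ℝ) :
    ∀ s : ℤ, ∃ L : ℝ, Tendsto (fun t => chainDist mstar p α μ0 t s) atTop (nhds L) := by
  obtain ⟨C, ρ, hC, hρ0, hρ1, hbound⟩ := exists_geom mstar p α hp0 hp1 hα
  intro s
  by_cases hs : s ∈ SS mstar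
  · -- Cauchy sequence with geometric differences
    set d : ℤ → ℝ := fun u => μ0 u - Phi mstar p α μ0 u with hddef
    have hd : ∑ u ∈ SS mstar, d u = 0 := by
      simp only [hddef]
      rw [Finset.sum_sub_distrib, Phi_sum, sub_self]
    have hdiff : ∀ t : ℕ, chainDist mstar p α μ0 t s - chainDist mstar p α μ0 (t+1) s
        = (Phi mstar p α)^[t] d s := by
      intro t
      have h1 : (Phi mstar p α)^[t] d s
          = (Phi mstar p α)^[t] μ0 s - (Phi mstar p α)^[t] (Phi mstar p α μ0) s := by
        rw [hddef]
        exact congrFun (iter_sub mstar p α t μ0 (Phi mstar p α μ0)) s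
      rw [chainDist_eq_iterate, chainDist_eq_iterate, Function.iterate_succ_apply, h1]
    have hcauchy : CauchySeq (fun t => chainDist mstar p α μ0 t s) := by
      apply cauchySeq_of_le_geometric ρ (C * (∑ u ∈ SS mstar, |d u|)) hρ1
      intro t
      rw [Real.dist_eq, hdiff t]
      calc |(Phi mstar p α)^[t] d s| ≤ C * (∑ u ∈ SS mstar, |d u|) * ρ ^ t :=
            hbound d hd t s hs
        _ = C * (∑ u ∈ SS mstar, |d u|) * ρ ^ t := rfl
    exact cauchySeq_tendsto_of_complete hcauchy
  · refine ⟨0, ?_⟩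
    apply Tendsto.congr' (f₁ := fun _ => (0:ℝ))
    · filter_upwards [eventually_ge_atTop 1] with t ht
      obtain ⟨t', rfl⟩ : ∃ t', t = t' + 1 := ⟨t - 1, by omega⟩
      exact (chain_outside mstar p α μ0 s hs t').symm
    · exact tendsto_const_nhds

end ELink
namespace ELink

lemma chain_nonneg (mstar : ℕ) (p : ℝ) (α : ℤ → ℝ) (hp0 : 0 < p) (hp1 : p < 1)
    (hα : ValidDecision mstar α) (μ0 : ℤ → ℝ) (hμ0 : ValidInit mstar μ0) :
    ∀ t : ℕ, ∀ s ∈ SS mstar, 0 ≤ chainDist mstar p α μ0 t s := by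
  intro t
  induction t with
  | zero => exact hμ0.1
  | succ t ih =>
    intro s hs
    show 0 ≤ ∑ u ∈ Finset.Icc (-1 : ℤ) (mstar : ℤ), Pd mstar p α s u * chainDist mstar p α μ0 t u
    exact Finset.sum_nonneg fun u hu =>
      mul_nonneg (Pd_nonneg mstar p α hp0.le hp1.le hα s u hu) (ih u hu)

lemma chain_sum (mstar : ℕ) (p : ℝ) (α : ℤ → ℝ) (μ0 : ℤ → ℝ) (hμ0 : ValidInit mstar μ0) :
    ∀ t : ℕ, ∑ s ∈ SS mstar, chainDist mstar p α μ0 t s = 1 := by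
  intro t
  rw [show (fun s => chainDist mstar p α μ0 t s) = chainDist mstar p α μ0 t from rfl]
  have : ∑ s ∈ SS mstar, chainDist mstar p α μ0 t s
      = ∑ s ∈ SS mstar, (Phi mstar p α)^[t] μ0 s := by
    rw [chainDist_eq_iterate]
  rw [this, iter_sum]
  exact hμ0.2

lemma sum_split (mstar : ℕ) (g : ℤ → ℝ) (hg : g (-1) = 0) :
    ∑ m ∈ Finset.Icc (-1 : ℤ) (mstar : ℤ), g m = ∑ m ∈ Finset.Icc (0 : ℤ) (mstar : ℤ), g m := by
  have hins : Finset.Icc (-1 : ℤ) (mstar : ℤ)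
      = insert (-1 : ℤ) (Finset.Icc (0 : ℤ) (mstar : ℤ)) := by
    ext x
    simp only [Finset.mem_Icc, Finset.mem_insert]
    omega
  rw [hins, Finset.sum_insert (by simp), hg, zero_add]

/-- Forward direction: every achievable steady-state value is an LP value. -/
lemma limit_is_LP (mstar : ℕ) (p : ℝ) (hp0 : 0 < p) (hp1 : p < 1)
    (f : ℤ → ℝ) (hf0 : f (-1) = 0)
    (μ0 : ℤ → ℝ) (hμ0 : ValidInit mstar μ0) (α : ℤ → ℝ) (hα : ValidDecision mstar α)
    (L : ℝ) (hL : Tendsto (Ftil mstar p α μ0 f) atTop (nhds L)) :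
    ∃ v w0 w1 : ℤ → ℝ, LPFeasible mstar p v w0 w1 ∧
      L = ∑ m ∈ Finset.Icc (-1 : ℤ) (mstar : ℤ), f m * v m := by
  obtain ⟨v, hv⟩ : ∃ v : ℤ → ℝ, ∀ s : ℤ,
      Tendsto (fun t => chainDist mstar p α μ0 t s) atTop (nhds (v s)) := by
    have h := exists_limit mstar p α hp0 hp1 hα μ0
    exact ⟨fun s => Classical.choose (h s), fun s => Classical.choose_spec (h s)⟩
  have hvnn : ∀ s ∈ SS mstar, 0 ≤ v s := fun s hs =>
    ge_of_tendsto (hv s) (Eventually.of_forall fun t =>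
      chain_nonneg mstar p α hp0 hp1 hα μ0 hμ0 t s hs)
  have hvsum : ∑ s ∈ SS mstar, v s = 1 := by
    have h1 : Tendsto (fun t => ∑ s ∈ SS mstar, chainDist mstar p α μ0 t s) atTop
        (nhds (∑ s ∈ SS mstar, v s)) :=
      tendsto_finset_sum _ fun s _ => hv s
    have h2 : Tendsto (fun t => ∑ s ∈ SS mstar, chainDist mstar p α μ0 t s) atTop
        (nhds 1) := by
      have : (fun t => ∑ s ∈ SS mstar, chainDist mstar p α μ0 t s) = fun _ => (1:ℝ) := by
        funext t; exact chain_sum mstar p α μ0 hμ0 t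
      rw [this]; exact tendsto_const_nhds
    exact tendsto_nhds_unique h1 h2
  have hstat : ∀ s' : ℤ, Phi mstar p α v s' = v s' := by
    intro s'
    have h1 : Tendsto (fun t => chainDist mstar p α μ0 (t+1) s') atTop
        (nhds (Phi mstar p α v s')) := by
      have heq : (fun t => chainDist mstar p α μ0 (t+1) s')
          = fun t => ∑ s ∈ SS mstar, Pd mstar p α s' s * chainDist mstar p α μ0 t s := rfl
      rw [heq]
      exact tendsto_finset_sum _ fun s _ => (hv s).const_mul _
    have h2 : Tendsto (fun t => chainDist mstar p α μ0 (t+1) s') atTop (nhds (v s')) :=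
      (hv s').comp (tendsto_add_atTop_nat 1)
    exact tendsto_nhds_unique h1 h2
  refine ⟨v, fun s => α s * v s, fun s => (1 - α s) * v s, ⟨?_, hvsum, ?_, ?_⟩, ?_⟩
  · intro s hs
    obtain ⟨ha0, ha1⟩ := hα s hs
    have hv0 := hvnn s hs
    have hv1 : v s ≤ 1 := by
      rw [← hvsum]
      exact Finset.single_le_sum (fun u hu => hvnn u hu) hs
    refine ⟨mul_nonneg ha0 hv0, ?_, mul_nonneg (by linarith) hv0, ?_, hv1⟩
    · show α s * v s ≤ v s
      nlinarith
    · show (1 - α s) * v s ≤ v s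
      nlinarith
  · intro s _; ring
  · intro s' hs'
    have := hstat s'
    rw [← this]
    unfold Phi Pd
    exact Finset.sum_congr rfl fun s _ => by ring
  · have h1 : Tendsto (Ftil mstar p α μ0 f) atTop
        (nhds (∑ m ∈ Finset.Icc (0:ℤ) (mstar:ℤ), f m * v m)) := by
      unfold Ftil
      exact tendsto_finset_sum _ fun m _ => (hv m).const_mul _
    have := tendsto_nhds_unique hL h1
    rw [this, sum_split mstar (fun m => f m * v m)
      (by show f (-1) * v (-1) = 0; rw [hf0, zero_mul])]

/-- Reverse direction: every LP value is an achievable steady-state value. -/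
lemma LP_is_limit (mstar : ℕ) (p : ℝ) (hp0 : 0 < p) (hp1 : p < 1)
    (f : ℤ → ℝ) (hf0 : f (-1) = 0)
    (μ0 : ℤ → ℝ) (hμ0 : ValidInit mstar μ0) (v w0 w1 : ℤ → ℝ)
    (hfeas : LPFeasible mstar p v w0 w1) :
    ∃ α : ℤ → ℝ, ValidDecision mstar α ∧
      Tendsto (Ftil mstar p α μ0 f) atTop
        (nhds (∑ m ∈ Finset.Icc (-1 : ℤ) (mstar : ℤ), f m * v m)) := by
  obtain ⟨hbox, hsum, hadd, hstat0⟩ := hfeas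
  set α : ℤ → ℝ := fun s => if v s = 0 then 1 else w0 s / v s with hαdef
  have hα : ValidDecision mstar α := by
    intro s hs
    obtain ⟨h0, h1, h2, h3, h4⟩ := hbox s hs
    simp only [hαdef]
    split_ifs with h
    · norm_num
    · have hv0 : 0 < v s := lt_of_le_of_ne (le_trans h0 h1) (Ne.symm h)
      exact ⟨div_nonneg h0 hv0.le, (div_le_one hv0).mpr h1⟩
  have hvstat : ∀ s' ∈ SS mstar, Phi mstar p α v s' = v s' := by
    intro s' hs'
    have hterm : ∀ s ∈ SS mstar, Pd mstar p α s' s * v s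
        = T0 mstar s' s * w0 s + T1 p s' s * w1 s := by
      intro s hs
      obtain ⟨h0, h1, h2, h3, h4⟩ := hbox s hs
      by_cases h : v s = 0
      · have hw0 : w0 s = 0 := le_antisymm (h ▸ h1) h0
        have hw1 : w1 s = 0 := le_antisymm (h ▸ h3) h2
        rw [h, hw0, hw1]; ring
      · have hα1 : α s = w0 s / v s := by simp only [hαdef, if_neg h]
        have hα2 : 1 - α s = w1 s / v s := by
          rw [hα1]
          have := hadd s hs
          field_simp
          linarith
        unfold Pd
        rw [hα2, hα1]
        field_simp
        try ring
    unfold Phi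
    rw [Finset.sum_congr rfl hterm, ← hstat0 s' hs']
  refine ⟨α, hα, ?_⟩
  have hvsum : ∑ s ∈ SS mstar, v s = 1 := hsum
  have htend := tendsto_chain mstar p α hp0 hp1 hα μ0 hμ0 v hvsum hvstat
  have hfin : Tendsto (Ftil mstar p α μ0 f) atTop
      (nhds (∑ m ∈ Finset.Icc (0:ℤ) (mstar:ℤ), f m * v m)) := by
    unfold Ftil
    refine tendsto_finset_sum _ fun m hm => ?_
    have hmS : m ∈ SS mstar := by
      simp only [SS, Finset.mem_Icc]
      simp only [Finset.mem_Icc] at hm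
      omega
    exact (htend m hmS).const_mul _
  rw [sum_split mstar (fun m => f m * v m)
    (by show f (-1) * v (-1) = 0; rw [hf0, zero_mul])]
  exact hfin

end ELink

/-- **Linear program for the optimal steady-state value of an elementary link**:
the supremum over decision functions of the steady-state value equals the optimal value
of the linear program, and every feasible point yields a decision function via
`d(m)(a) = ⟨m|w_a⟩/⟨m|v⟩` whenever `⟨m|v⟩ > 0`. -/
theorem lp_optimal_steady_state (mstar : ℕ) (p : ℝ) (hp0 : 0 < p) (hp1 : p < 1)
    (f : ℤ → ℝ) (hf0 : f (-1) = 0)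
    (hf : ∀ m ∈ Finset.Icc (-1 : ℤ) (mstar : ℤ), 0 ≤ f m ∧ f m ≤ 1)
    (μ0 : ℤ → ℝ) (hμ0 : ValidInit mstar μ0) :
    (sSup {L : ℝ | ∃ α : ℤ → ℝ, ValidDecision mstar α ∧
        Tendsto (Ftil mstar p α μ0 f) atTop (nhds L)}
      = sSup {c : ℝ | ∃ v w0 w1 : ℤ → ℝ, LPFeasible mstar p v w0 w1 ∧
          c = ∑ m ∈ Finset.Icc (-1 : ℤ) (mstar : ℤ), f m * v m}) ∧
    (∀ v w0 w1 : ℤ → ℝ, LPFeasible mstar p v w0 w1 →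
      ∀ m ∈ Finset.Icc (-1 : ℤ) (mstar : ℤ), 0 < v m →
        0 ≤ w0 m / v m ∧ 0 ≤ w1 m / v m ∧ w0 m / v m + w1 m / v m = 1) := by

  constructor
  · have hset : {L : ℝ | ∃ α : ℤ → ℝ, ValidDecision mstar α ∧
        Tendsto (Ftil mstar p α μ0 f) atTop (nhds L)}
        = {c : ℝ | ∃ v w0 w1 : ℤ → ℝ, LPFeasible mstar p v w0 w1 ∧
          c = ∑ m ∈ Finset.Icc (-1 : ℤ) (mstar : ℤ), f m * v m} := by
      ext x
      constructor
      · rintro ⟨α, hα, hL⟩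
        exact ELink.limit_is_LP mstar p hp0 hp1 f hf0 μ0 hμ0 α hα x hL
      · rintro ⟨v, w0, w1, hfeas, rfl⟩
        obtain ⟨α, hα, htend⟩ := ELink.LP_is_limit mstar p hp0 hp1 f hf0 μ0 hμ0 v w0 w1 hfeas
        exact ⟨α, hα, htend⟩
    rw [hset]
  · intro v w0 w1 hfeas m hm hvm
    obtain ⟨h0, h1, h2, h3, h4⟩ := hfeas.1 m hm
    refine ⟨div_nonneg h0 hvm.le, div_nonneg h2 hvm.le, ?_⟩
    rw [← add_div, hfeas.2.2.1 m hm, div_self (ne_of_gt hvm)]
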